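/- Let φ be a comparison function for which there exist a ∈ (0,1) and positive reals b_n such that φ^[n+1](r) ≤ a·φ^[n](r) + b_n for every n ∈ ℕ and every r ≥ 0. If for some γ > 0 the series Σ_{n≥0} n^γ · b_n converges, then the series Σ_{n≥1} n^γ · φ^[n](r) converges for every r ≥ 0. -/

import Mathlib

theorem summable_of_linear_recursive_bound
    (φ : ℝ → ℝ)
    (hφ_nonneg : ∀ r, 0 ≤ r → 0 ≤ φ r)
    (hφ_mono : ∀ x y, 0 ≤ x → x ≤ y → φ x ≤ φ y)
    (hφ_iter : ∀ r, 0 ≤ r → Filter.Tendsto (fun n => φ^[n] r) Filter.atTop (nhds 0))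
    (a : ℝ) (ha : a ∈ Set.Ioo (0 : ℝ) 1)
    (b : ℕ → ℝ) (hb : ∀ n, 0 < b n)
    (hrec : ∀ (n : ℕ) (r : ℝ), 0 ≤ r → φ^[n + 1] r ≤ a * φ^[n] r + b n)
    (γ : ℝ) (hγ : 0 < γ)
    (hsum : Summable (fun n : ℕ => (n : ℝ) ^ γ * b n)) :
    ∀ r : ℝ, 0 ≤ r → Summable (fun n : ℕ => (n : ℝ) ^ γ * φ^[n] r) := by
  obtain ⟨ha0, ha1⟩ := ha
  intro r hr
  have hc : ∀ n, 0 ≤ φ^[n] r := by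
    intro n
    induction n with
    | zero => simpa
    | succ n ih => rw [Function.iterate_succ_apply']; exact hφ_nonneg _ ih
  set d : ℕ → ℝ := fun n => (n : ℝ) ^ γ * φ^[n] r with hd
  have hdnn : ∀ n, 0 ≤ d n := fun n =>
    mul_nonneg (Real.rpow_nonneg (Nat.cast_nonneg n) γ) (hc n)
  set a' : ℝ := (a + 1) / 2 with ha'
  have haa' : a < a' := by rw [ha']; linarith
  have ha'1 : a' < 1 := by rw [ha']; linarith
  -- eventually a * ((n+1)/n)^γ ≤ a'
  have hlim : Filter.Tendsto (fun n : ℕ => a * (((n : ℝ) + 1) / n) ^ γ)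
      Filter.atTop (nhds a) := by
    have h1 : Filter.Tendsto (fun n : ℕ => ((n : ℝ) + 1) / n) Filter.atTop (nhds 1) := by
      have h0 : Filter.Tendsto (fun n : ℕ => 1 + 1 / (n : ℝ)) Filter.atTop (nhds 1) := by
        simpa using tendsto_const_nhds.add (tendsto_one_div_atTop_nhds_zero_nat (𝕜 := ℝ))
      refine h0.congr' ?_
      filter_upwards [Filter.eventually_gt_atTop 0] with n hn
      have hn' : (0 : ℝ) < n := by exact_mod_cast hn
      field_simp
    have h2 : Filter.Tendsto (fun n : ℕ => (((n : ℝ) + 1) / n) ^ γ)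
        Filter.atTop (nhds 1) := by
      have := h1.rpow_const (p := γ) (Or.inl one_ne_zero)
      simpa using this
    simpa using (tendsto_const_nhds.mul h2)
  obtain ⟨N0, hN0⟩ := (Filter.eventually_atTop).1 (hlim.eventually_lt_const haa')
  set N : ℕ := max N0 1 with hNdef
  have hN1 : 1 ≤ N := le_max_right _ _
  have hNle : ∀ n, N ≤ n → a * (((n : ℝ) + 1) / n) ^ γ ≤ a' :=
    fun n hn => (hN0 n (le_trans (le_max_left _ _) hn)).le
  -- key recursive step
  have hstep : ∀ n, N ≤ n → d (n + 1) ≤ a' * d n + 2 ^ γ * ((n : ℝ) ^ γ * b n) := by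
    intro n hn
    have hn1 : (1 : ℝ) ≤ n := by exact_mod_cast le_trans hN1 hn
    have hn0 : (0 : ℝ) < n := by linarith
    have h1 : ((n : ℝ) + 1) ^ γ = (((n : ℝ) + 1) / n) ^ γ * (n : ℝ) ^ γ := by
      rw [← Real.mul_rpow (by positivity) (by positivity)]
      congr 1
      field_simp
    have h2 : ((n : ℝ) + 1) ^ γ ≤ 2 ^ γ * (n : ℝ) ^ γ := by
      rw [← Real.mul_rpow (by norm_num) (by positivity)]
      exact Real.rpow_le_rpow (by positivity) (by linarith) hγ.le
    have hcast : d (n + 1) = ((n : ℝ) + 1) ^ γ * φ^[n + 1] r := by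
      rw [hd]; push_cast; ring_nf
    calc d (n + 1) = ((n : ℝ) + 1) ^ γ * φ^[n + 1] r := hcast
      _ ≤ ((n : ℝ) + 1) ^ γ * (a * φ^[n] r + b n) :=
          mul_le_mul_of_nonneg_left (hrec n r hr) (Real.rpow_nonneg (by positivity) γ)
      _ = (a * (((n : ℝ) + 1) / n) ^ γ) * ((n : ℝ) ^ γ * φ^[n] r)
            + ((n : ℝ) + 1) ^ γ * b n := by rw [h1]; ring
      _ ≤ a' * d n + 2 ^ γ * ((n : ℝ) ^ γ * b n) := by
          refine add_le_add (mul_le_mul_of_nonneg_right (hNle n hn)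
            (mul_nonneg (Real.rpow_nonneg hn0.le γ) (hc n))) ?_
          rw [← mul_assoc]
          exact mul_le_mul_of_nonneg_right h2 (hb n).le
  -- summable bound series
  have hB : Summable (fun n : ℕ => 2 ^ γ * ((n : ℝ) ^ γ * b n)) := hsum.mul_left _
  set K : ℝ := ∑' n : ℕ, 2 ^ γ * ((n : ℝ) ^ γ * b n) with hK
  have hBsum : ∀ M : ℕ, ∑ n ∈ Finset.Ico N M, 2 ^ γ * ((n : ℝ) ^ γ * b n) ≤ K := by
    intro M
    refine Summable.sum_le_tsum _ (fun n _ => ?_) hB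
    have := (hb n).le
    positivity
  -- partial-sum bound on Ico N M
  have hC : ∀ M : ℕ, ∑ n ∈ Finset.Ico N M, d n ≤ (d N + K) / (1 - a') := by
    intro M
    rcases le_or_gt M N with hMN | hMN
    · rw [Finset.Ico_eq_empty (by omega), Finset.sum_empty]
      have hK0 : 0 ≤ K := tsum_nonneg (fun n => by have := (hb n).le; positivity)
      exact div_nonneg (by linarith [hdnn N]) (by linarith)
    · set T : ℝ := ∑ n ∈ Finset.Ico N M, d n with hT
      have h1 : ∑ n ∈ Finset.Ico N M, d (n + 1) ≤ a' * T + K := by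
        calc ∑ n ∈ Finset.Ico N M, d (n + 1)
            ≤ ∑ n ∈ Finset.Ico N M, (a' * d n + 2 ^ γ * ((n : ℝ) ^ γ * b n)) :=
              Finset.sum_le_sum (fun n hn => hstep n (Finset.mem_Ico.1 hn).1)
          _ = a' * T + ∑ n ∈ Finset.Ico N M, 2 ^ γ * ((n : ℝ) ^ γ * b n) := by
              rw [Finset.sum_add_distrib, ← Finset.mul_sum]
          _ ≤ a' * T + K := by linarith [hBsum M]
      have h2 : T - d N ≤ ∑ n ∈ Finset.Ico N M, d (n + 1) := by
        have e1 : ∑ n ∈ Finset.Ico N M, d (n + 1) = ∑ n ∈ Finset.Ico (N + 1) (M + 1), d n := by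
          rw [Finset.sum_Ico_eq_sum_range, Finset.sum_Ico_eq_sum_range]
          simp only [add_tsub_add_eq_tsub_right]
          exact Finset.sum_congr rfl (fun i _ => by ring_nf)
        have e2 : T = d N + ∑ n ∈ Finset.Ico (N + 1) M, d n := by
          rw [hT, ← Finset.sum_eq_sum_Ico_succ_bot hMN]
        have e3 : ∑ n ∈ Finset.Ico (N + 1) M, d n ≤ ∑ n ∈ Finset.Ico (N + 1) (M + 1), d n :=
          Finset.sum_le_sum_of_subset_of_nonneg
            (Finset.Ico_subset_Ico le_rfl (by omega)) (fun n _ _ => hdnn n)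
        rw [e1]; linarith
      have h3 : (1 - a') * T ≤ d N + K := by linarith
      rw [le_div_iff₀ (by linarith : (0:ℝ) < 1 - a')]
      linarith
  -- conclude
  refine summable_of_sum_range_le hdnn (c := (∑ n ∈ Finset.range N, d n) + (d N + K) / (1 - a')) ?_
  intro M
  rcases le_or_gt M N with hMN | hMN
  · have h1 : ∑ i ∈ Finset.range M, d i ≤ ∑ i ∈ Finset.range N, d i :=
      Finset.sum_le_sum_of_subset_of_nonneg (Finset.range_subset_range.2 hMN) (fun n _ _ => hdnn n)
    have hK0 : 0 ≤ K := tsum_nonneg (fun n => by have := (hb n).le; positivity)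
    have h2 : 0 ≤ (d N + K) / (1 - a') :=
      div_nonneg (by linarith [hdnn N]) (by linarith)
    linarith
  · have e : ∑ i ∈ Finset.range M, d i
        = ∑ i ∈ Finset.range N, d i + ∑ n ∈ Finset.Ico N M, d n := by
      rw [Finset.range_eq_Ico, Finset.range_eq_Ico]
      exact (Finset.sum_Ico_consecutive _ (Nat.zero_le N) hMN.le).symm
    rw [e]
    linarith [hC M]
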